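/- Let a ∈ ℝⁿ and c ∈ ℝ, and define g : ℝⁿ → ℝ by g(w) = ‖w − a‖₂² + (‖w‖₂² − 1 + c)². If w* is a local minimizer of g, then 2(w* − a) + 4(‖w*‖₂² − 1 + c)·w* = 0; consequently (2‖w*‖₂² − 1 + 2c)·w* = a, and the scalar u = ‖w*‖₂ satisfies the cubic equation |2u³ − u + 2cu| = ‖a‖₂. -/

import Mathlib

/-- Closed-form characterization of the `w`-update subproblem of neADMM for spherical
constraints: at a local minimizer `w` of `g w = ‖w − a‖² + (‖w‖² − 1 + c)²`, the
first-order condition `2(w − a) + 4(‖w‖² − 1 + c)·w = 0` holds; consequently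
`(2‖w‖² − 1 + 2c)·w = a` and `u = ‖w‖` solves the cubic `|2u³ − u + 2cu| = ‖a‖`. -/
theorem neADMM_sphere_w_update {n : ℕ} (a : EuclideanSpace ℝ (Fin n)) (c : ℝ)
    (g : EuclideanSpace ℝ (Fin n) → ℝ)
    (hg : ∀ w : EuclideanSpace ℝ (Fin n), g w = ‖w - a‖ ^ 2 + (‖w‖ ^ 2 - 1 + c) ^ 2)
    (w : EuclideanSpace ℝ (Fin n)) (hw : IsLocalMin g w) :
    (2 : ℝ) • (w - a) + (4 * (‖w‖ ^ 2 - 1 + c)) • w = 0 ∧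
    (2 * ‖w‖ ^ 2 - 1 + 2 * c) • w = a ∧
    |2 * ‖w‖ ^ 3 - ‖w‖ + 2 * c * ‖w‖| = ‖a‖ := by
  have hg' : g = fun x => ‖x - a‖ ^ 2 + (‖x‖ ^ 2 - 1 + c) ^ 2 := funext hg
  subst hg'
  have h1 : HasFDerivAt (fun x : EuclideanSpace ℝ (Fin n) => ‖x - a‖ ^ 2)
      (2 • (innerSL ℝ (w - a)).comp (ContinuousLinearMap.id ℝ _)) w :=
    ((hasFDerivAt_id w).sub_const a).norm_sq
  have hφ : HasFDerivAt (fun x : EuclideanSpace ℝ (Fin n) => ‖x‖ ^ 2 - 1 + c)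
      (2 • (innerSL ℝ w)) w := by
    simpa using (((hasFDerivAt_id w).norm_sq).sub_const 1).add_const c
  have h2 : HasFDerivAt (fun x : EuclideanSpace ℝ (Fin n) => (‖x‖ ^ 2 - 1 + c) ^ 2)
      ((2 * (‖w‖ ^ 2 - 1 + c)) • (2 • (innerSL ℝ w))) w := by
    have := hφ.mul hφ
    simp only [← sq] at this
    refine this.congr_fderiv ?_
    module
  have hD := hw.hasFDerivAt_eq_zero (h1.add h2)
  have key : ∀ v : EuclideanSpace ℝ (Fin n),
      (2 : ℝ) * inner ℝ (w - a) v + (4 * (‖w‖ ^ 2 - 1 + c)) * inner ℝ w v = 0 := by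
    intro v
    have := DFunLike.congr_fun hD v
    simp only [ContinuousLinearMap.add_apply, ContinuousLinearMap.smul_apply,
      ContinuousLinearMap.coe_comp', Function.comp_apply, ContinuousLinearMap.coe_id', id_eq,
      innerSL_apply_apply, smul_eq_mul, nsmul_eq_mul, Nat.cast_ofNat, ContinuousLinearMap.zero_apply] at this
    linarith [this]
  have hfo : (2 : ℝ) • (w - a) + (4 * (‖w‖ ^ 2 - 1 + c)) • w = 0 := by
    set z := (2 : ℝ) • (w - a) + (4 * (‖w‖ ^ 2 - 1 + c)) • w with hz
    have : (inner ℝ z z : ℝ) = 0 := by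
      rw [hz]
      simp only [inner_add_left, real_inner_smul_left]
      exact key z
    exact inner_self_eq_zero.mp this
  refine ⟨hfo, ?_, ?_⟩
  · have h2' : (2 * ‖w‖ ^ 2 - 1 + 2 * c) • w = a := by
      have : ((2 : ℝ) + 4 * (‖w‖ ^ 2 - 1 + c)) • w = (2 : ℝ) • a := by
        have := hfo
        rw [smul_sub] at this
        rw [add_smul]
        linear_combination (norm := module) this
      have h4 : (2 * ‖w‖ ^ 2 - 1 + 2 * c) • w = ((2:ℝ)⁻¹ * (2 + 4 * (‖w‖ ^ 2 - 1 + c))) • w := by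
        ring_nf
      rw [h4, mul_smul, this, smul_smul]
      norm_num
    exact h2'
  · have h2' : (2 * ‖w‖ ^ 2 - 1 + 2 * c) • w = a := by
      have : ((2 : ℝ) + 4 * (‖w‖ ^ 2 - 1 + c)) • w = (2 : ℝ) • a := by
        rw [smul_sub] at hfo
        rw [add_smul]
        linear_combination (norm := module) hfo
      have h4 : (2 * ‖w‖ ^ 2 - 1 + 2 * c) • w = ((2:ℝ)⁻¹ * (2 + 4 * (‖w‖ ^ 2 - 1 + c))) • w := by
        ring_nf
      rw [h4, mul_smul, this, smul_smul]
      norm_num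
    have := congrArg norm h2'
    rw [norm_smul] at this
    rw [Real.norm_eq_abs] at this
    have habs : |2 * ‖w‖ ^ 3 - ‖w‖ + 2 * c * ‖w‖| = |(2 * ‖w‖ ^ 2 - 1 + 2 * c) * ‖w‖| := by
      congr 1; ring
    rw [habs, abs_mul, abs_of_nonneg (norm_nonneg w), this]
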